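/- Let Sim(n) denote the group of all similarities of ℝⁿ. For every i with 1 ≤ i ≤ n, the pair (𝒦ⁿ_{i⁺}, ℝⁿ) has the Sim(n)-finite extension property: for all finite sets {K_1,…,K_m} ⊆ 𝒦ⁿ_{i⁺} and {y_1,…,y_m} ⊆ ℝⁿ such that for every j the Sim(n)-stabilizer of K_j is contained in the Sim(n)-stabilizer of y_j, and such that the Sim(n)-orbits of K_j and K_k are disjoint whenever j ≠ k, there exists a continuous Sim(n)-equivariant map ψ : 𝒦ⁿ_{i⁺} → ℝⁿ with ψ(K_j) = y_j for every j ∈ {1,…,m}. -/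

import Mathlib

noncomputable abbrev Euc (n : ℕ) := EuclideanSpace ℝ (Fin n)

open Metric Set MeasureTheory

namespace S17

variable {n : ℕ}

/-- The circumradius-type function: sup of distances from `x` to points of `A`. -/
noncomputable def rad (A : ConvexBody (Euc n)) (x : Euc n) : ℝ :=
  sSup ((dist x ·) '' (A : Set (Euc n)))

lemma rad_image_compact (A : ConvexBody (Euc n)) (x : Euc n) :
    IsCompact ((dist x ·) '' (A : Set (Euc n))) :=
  A.isCompact.image (by fun_prop)

lemma dist_le_rad (A : ConvexBody (Euc n)) {a : Euc n} (ha : a ∈ (A : Set (Euc n)))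
    (x : Euc n) : dist x a ≤ rad A x :=
  le_csSup (rad_image_compact A x).bddAbove ⟨a, ha, rfl⟩

lemma exists_rad_eq (A : ConvexBody (Euc n)) (x : Euc n) :
    ∃ a ∈ (A : Set (Euc n)), rad A x = dist x a := by
  have h := (rad_image_compact A x).sSup_mem (A.nonempty.image _)
  obtain ⟨a, ha, hd⟩ := h
  exact ⟨a, ha, hd.symm⟩

lemma rad_nonneg (A : ConvexBody (Euc n)) (x : Euc n) : 0 ≤ rad A x := by
  obtain ⟨a, ha, h⟩ := exists_rad_eq A x
  rw [h]; exact dist_nonneg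

lemma rad_le (A : ConvexBody (Euc n)) (x : Euc n) {r : ℝ}
    (h : ∀ a ∈ (A : Set (Euc n)), dist x a ≤ r) : rad A x ≤ r := by
  apply csSup_le (A.nonempty.image _)
  rintro _ ⟨a, ha, rfl⟩; exact h a ha

lemma rad_lipschitz_pt (A : ConvexBody (Euc n)) (x y : Euc n) :
    rad A x ≤ rad A y + dist x y := by
  apply rad_le
  intro a ha
  calc dist x a ≤ dist x y + dist y a := dist_triangle _ _ _
  _ ≤ dist x y + rad A y := by linarith [dist_le_rad A ha y]
  _ = rad A y + dist x y := by ring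

lemma rad_lipschitz_body (A B : ConvexBody (Euc n)) (x : Euc n) :
    rad A x ≤ rad B x + dist A B := by
  apply rad_le
  intro a ha
  obtain ⟨b, hb, hab⟩ := B.isCompact.exists_infDist_eq_dist B.nonempty a
  have h1 : infDist a (B : Set (Euc n)) ≤ hausdorffDist (A : Set (Euc n)) B :=
    infDist_le_hausdorffDist_of_mem ha ConvexBody.hausdorffEdist_ne_top
  rw [ConvexBody.hausdorffDist_coe] at h1
  calc dist x a ≤ dist x b + dist b a := dist_triangle _ _ _
  _ ≤ rad B x + dist A B := by
      have := dist_le_rad B hb x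
      rw [dist_comm b a, ← hab] at *
      linarith

lemma continuous_rad_pt (A : ConvexBody (Euc n)) : Continuous (rad A) := by
  apply (LipschitzWith.of_dist_le_mul (K := 1) ?_).continuous
  intro x y
  rw [NNReal.coe_one, one_mul, Real.dist_eq, abs_sub_le_iff]
  constructor <;> [skip; rw [dist_comm x y]] <;>
    linarith [rad_lipschitz_pt A x y, rad_lipschitz_pt A y x]

/-- Existence of a Chebyshev center. -/
lemma exists_cheb (A : ConvexBody (Euc n)) : ∃ x : Euc n, ∀ y, rad A x ≤ rad A y := by
  obtain ⟨a₀, ha₀⟩ := A.nonempty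
  set R₀ := rad A a₀ with hR₀
  have hR₀0 : 0 ≤ R₀ := rad_nonneg A a₀
  obtain ⟨x₀, hx₀mem, hx₀⟩ := (isCompact_closedBall a₀ (2 * R₀ + 1)).exists_isMinOn
    ⟨a₀, by simp [mem_closedBall]; positivity⟩ (continuous_rad_pt A).continuousOn
  refine ⟨x₀, fun y => ?_⟩
  by_cases hy : y ∈ closedBall a₀ (2 * R₀ + 1)
  · exact hx₀ hy
  · have hx₀R : rad A x₀ ≤ R₀ := hx₀ (by simp [mem_closedBall]; positivity)
    have hy' : 2 * R₀ + 1 < dist y a₀ := by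
      simpa [mem_closedBall] using hy
    have h2 : dist y a₀ - R₀ ≤ rad A y := by
      have h3 := dist_le_rad A ha₀ y
      linarith
    linarith

/-- The Chebyshev center of a convex body. -/
noncomputable def cheb (A : ConvexBody (Euc n)) : Euc n := Classical.choose (exists_cheb A)

lemma cheb_spec (A : ConvexBody (Euc n)) (y : Euc n) : rad A (cheb A) ≤ rad A y :=
  Classical.choose_spec (exists_cheb A) y

/-- The Chebyshev radius. -/
noncomputable def chebR (A : ConvexBody (Euc n)) : ℝ := rad A (cheb A)

lemma chebR_nonneg (A : ConvexBody (Euc n)) : 0 ≤ chebR A := rad_nonneg _ _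

/-- Quantitative uniqueness of the Chebyshev center. -/
lemma cheb_quant (A : ConvexBody (Euc n)) {x y : Euc n} {r : ℝ}
    (hx : rad A x ≤ r) (hy : rad A y ≤ r) :
    dist x y ^ 2 ≤ 4 * (r ^ 2 - chebR A ^ 2) := by
  have hr0 : 0 ≤ r := le_trans (rad_nonneg A x) hx
  set m : Euc n := midpoint ℝ x y with hm
  obtain ⟨a, ha, hma⟩ := exists_rad_eq A m
  have key : dist m a ^ 2 ≤ r ^ 2 - dist x y ^ 2 / 4 := by
    have hpar := parallelogram_law_with_norm ℝ (x - a) (y - a)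
    have hxa : dist x a ≤ r := le_trans (dist_le_rad A ha x) hx
    have hya : dist y a ≤ r := le_trans (dist_le_rad A ha y) hy
    have hdm : dist m a = ‖(x - a) + (y - a)‖ / 2 := by
      rw [dist_eq_norm, hm]
      have hmid : midpoint ℝ x y - a = (2⁻¹ : ℝ) • ((x - a) + (y - a)) := by
        rw [midpoint_eq_smul_add, invOf_eq_inv]; module
      rw [hmid, norm_smul, norm_inv, Real.norm_ofNat]
      ring
    have hxy : ‖(x - a) - (y - a)‖ = dist x y := by
      rw [dist_eq_norm]; congr 1; abel
    have h1 : ‖(x - a) + (y - a)‖ ^ 2 = 2 * ‖x - a‖ ^ 2 + 2 * ‖y - a‖ ^ 2 - dist x y ^ 2 := by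
      rw [← hxy]; nlinarith [hpar]
    rw [hdm]
    have hxa' : ‖x - a‖ ≤ r := by rwa [← dist_eq_norm]
    have hya' : ‖y - a‖ ≤ r := by rwa [← dist_eq_norm]
    have h2 : ‖(x - a) + (y - a)‖ ^ 2 ≤ 4 * r ^ 2 - dist x y ^ 2 := by
      nlinarith [norm_nonneg (x - a), norm_nonneg (y - a)]
    nlinarith [norm_nonneg ((x - a) + (y - a))]
  have hcm : chebR A ≤ rad A m := cheb_spec A m
  have hcm2 : chebR A ^ 2 ≤ dist m a ^ 2 := by
    rw [← hma]
    have := chebR_nonneg A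
    nlinarith
  nlinarith

lemma cheb_eq_of_min (A : ConvexBody (Euc n)) {x : Euc n}
    (h : ∀ y, rad A x ≤ rad A y) : x = cheb A := by
  have h1 : rad A x = chebR A := le_antisymm (h (cheb A)) (cheb_spec A x)
  have h2 := cheb_quant A (r := chebR A) h1.le le_rfl
  have : dist x (cheb A) ^ 2 ≤ 0 := by linarith
  have : dist x (cheb A) = 0 := by nlinarith [dist_nonneg (x := x) (y := cheb A)]
  exact dist_eq_zero.mp this

/-- Continuity of the Chebyshev center w.r.t. the Hausdorff metric. -/
lemma continuous_cheb : Continuous (cheb (n := n)) := by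
  rw [Metric.continuous_iff]
  intro A ε hε
  set δ := min 1 (ε ^ 2 / (16 * (chebR A + 3))) with hδ
  have hRA := chebR_nonneg A
  have hδpos : 0 < δ := by
    apply lt_min one_pos
    positivity
  refine ⟨δ, hδpos, fun B hB => ?_⟩
  have hδ1 : δ ≤ 1 := min_le_left _ _
  have hδ2 : δ ≤ ε ^ 2 / (16 * (chebR A + 3)) := min_le_right _ _
  have h1 : rad B (cheb A) ≤ chebR A + δ := by
    have h := rad_lipschitz_body B A (cheb A)
    unfold chebR
    linarith
  have h2 : chebR B ≤ chebR A + δ := le_trans (cheb_spec B (cheb A)) h1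
  have h3 : chebR A ≤ chebR B + δ := by
    have h := rad_lipschitz_body A B (cheb B)
    rw [dist_comm A B] at h
    have h' := cheb_spec A (cheb B)
    unfold chebR at *
    linarith
  have h4 := cheb_quant B (x := cheb A) (y := cheb B) (r := chebR B + 2 * δ)
    (by unfold chebR at *; linarith) (by unfold chebR at *; linarith)
  have hRB : 0 ≤ chebR B := chebR_nonneg B
  have h5 : dist (cheb A) (cheb B) ^ 2 ≤ 16 * δ * (chebR B + δ) := by nlinarith
  have h6 : chebR B + δ ≤ chebR A + 2 * δ := by linarith
  have h7 : dist (cheb A) (cheb B) ^ 2 < ε ^ 2 := by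
    have h8 : 16 * δ * (chebR B + δ) ≤ 16 * δ * (chebR A + 2) := by nlinarith
    have h9 : 16 * δ * (chebR A + 2) < 16 * (ε ^ 2 / (16 * (chebR A + 3))) * (chebR A + 3) := by
      have hε2 : 0 < ε ^ 2 / (16 * (chebR A + 3)) := by positivity
      nlinarith
    have h10 : 16 * (ε ^ 2 / (16 * (chebR A + 3))) * (chebR A + 3) = ε ^ 2 := by
      field_simp
    nlinarith
  have := abs_dist (a := cheb A) (b := cheb B)
  rw [dist_comm]
  nlinarith [dist_nonneg (x := cheb A) (y := cheb B)]



variable {n : ℕ}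
lemma sSup_mul_image {S : Set ℝ} (hS : IsCompact S) (hne : S.Nonempty) {r : ℝ} (hr : 0 ≤ r) :
    sSup ((r * ·) '' S) = r * sSup S := by
  have h1 : IsCompact ((r * ·) '' S) := hS.image (by fun_prop)
  apply le_antisymm
  · apply csSup_le (hne.image _)
    rintro _ ⟨s, hs, rfl⟩
    exact mul_le_mul_of_nonneg_left (le_csSup hS.bddAbove hs) hr
  · exact le_csSup h1.bddAbove ⟨sSup S, hS.sSup_mem hne, rfl⟩

section Dilative

variable {f : Euc n → Euc n} {r : ℝ} (hr : 0 < r)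
  (hf : ∀ x y : Euc n, dist (f x) (f y) = r * dist x y) (hsurj : Function.Surjective f)
  {A B : ConvexBody (Euc n)} (hAB : (B : Set (Euc n)) = f '' (A : Set (Euc n)))

include hr hf hAB in
lemma rad_dilative (x : Euc n) : rad B (f x) = r * rad A x := by
  unfold rad
  rw [hAB]
  have himg : (dist (f x) ·) '' (f '' (A : Set (Euc n)))
      = (r * ·) '' ((dist x ·) '' (A : Set (Euc n))) := by
    rw [Set.image_image, Set.image_image]
    apply Set.image_congr
    intro a _
    exact hf x a
  rw [himg, sSup_mul_image (rad_image_compact A x) (A.nonempty.image _) hr.le]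

include hr hf hsurj hAB in
lemma cheb_dilative : cheb B = f (cheb A) := by
  symm
  apply cheb_eq_of_min
  intro z
  obtain ⟨w, rfl⟩ := hsurj z
  rw [rad_dilative hr hf hAB, rad_dilative hr hf hAB]
  exact mul_le_mul_of_nonneg_left (cheb_spec A w) hr.le

include hr hf hsurj hAB in
lemma chebR_dilative : chebR B = r * chebR A := by
  unfold chebR
  rw [cheb_dilative hr hf hsurj hAB, rad_dilative hr hf hAB]

include hr hf hAB in
lemma diam_dilative : Metric.diam (B : Set (Euc n)) = r * Metric.diam (A : Set (Euc n)) := by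
  apply le_antisymm
  · apply diam_le_of_forall_dist_le (by positivity)
    rintro _ hx _ hy
    rw [hAB] at hx hy
    obtain ⟨a, ha, rfl⟩ := hx
    obtain ⟨b, hb, rfl⟩ := hy
    rw [hf a b]
    exact mul_le_mul_of_nonneg_left (dist_le_diam_of_mem A.isBounded ha hb) hr.le
  · rw [mul_comm, ← le_div_iff₀ hr]
    apply diam_le_of_forall_dist_le (by positivity)
    intro a ha b hb
    rw [le_div_iff₀ hr, mul_comm, ← hf a b]
    apply dist_le_diam_of_mem B.isBounded <;> rw [hAB] <;>
      [exact ⟨a, ha, rfl⟩; exact ⟨b, hb, rfl⟩]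

end Dilative

lemma diam_lipschitz (A B : ConvexBody (Euc n)) :
    Metric.diam (A : Set (Euc n)) ≤ Metric.diam (B : Set (Euc n)) + 2 * dist A B := by
  have hd : 0 ≤ dist A B := dist_nonneg
  apply diam_le_of_forall_dist_le (by positivity)
  intro a ha a' ha'
  obtain ⟨b, hb, hab⟩ := B.isCompact.exists_infDist_eq_dist B.nonempty a
  obtain ⟨b', hb', hab'⟩ := B.isCompact.exists_infDist_eq_dist B.nonempty a'
  have h1 : infDist a (B : Set (Euc n)) ≤ dist A B := by
    rw [← ConvexBody.hausdorffDist_coe]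
    exact infDist_le_hausdorffDist_of_mem ha ConvexBody.hausdorffEdist_ne_top
  have h2 : infDist a' (B : Set (Euc n)) ≤ dist A B := by
    rw [← ConvexBody.hausdorffDist_coe]
    exact infDist_le_hausdorffDist_of_mem ha' ConvexBody.hausdorffEdist_ne_top
  calc dist a a' ≤ dist a b + dist b b' + dist b' a' := dist_triangle4 a b b' a'
  _ ≤ dist A B + Metric.diam (B : Set (Euc n)) + dist A B := by
      rw [hab] at h1
      rw [hab'] at h2
      rw [dist_comm b' a']
      have := dist_le_diam_of_mem B.isBounded hb hb'
      linarith
  _ = Metric.diam (B : Set (Euc n)) + 2 * dist A B := by ring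

lemma continuous_diam : Continuous (fun A : ConvexBody (Euc n) => Metric.diam (A : Set (Euc n))) := by
  apply (LipschitzWith.of_dist_le_mul (K := 2) ?_).continuous
  intro A B
  rw [NNReal.coe_two, Real.dist_eq, abs_sub_le_iff]
  constructor <;> [skip; rw [dist_comm A B]] <;>
    linarith [diam_lipschitz A B, diam_lipschitz B A]

lemma nontrivial_of_one_le_finrank {A : ConvexBody (Euc n)}
    (h : 1 ≤ Module.finrank ℝ (affineSpan ℝ (A : Set (Euc n))).direction) :
    (A : Set (Euc n)).Nontrivial := by
  by_contra hs
  rw [Set.not_nontrivial_iff] at hs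
  obtain ⟨a, ha⟩ := A.nonempty
  have hA : (A : Set (Euc n)) = {a} :=
    Set.eq_singleton_iff_unique_mem.mpr ⟨ha, fun x hx => hs hx ha⟩
  rw [hA, direction_affineSpan, vectorSpan_singleton] at h
  simp [finrank_bot] at h

lemma diam_pos_of_nontrivial {A : ConvexBody (Euc n)} (h : (A : Set (Euc n)).Nontrivial) :
    0 < Metric.diam (A : Set (Euc n)) := by
  obtain ⟨x, hx, y, hy, hxy⟩ := h
  have h1 : 0 < dist x y := dist_pos.mpr hxy
  have h2 := dist_le_diam_of_mem A.isBounded hx hy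
  linarith

/-- The singleton convex body. -/
noncomputable def pt (x : Euc n) : ConvexBody (Euc n) :=
  ⟨{x}, convex_singleton x, isCompact_singleton, ⟨x, rfl⟩⟩

/-- The normalization of a convex body: translate the Chebyshev center to the origin
and rescale to diameter one. -/
noncomputable def nbody (A : ConvexBody (Euc n)) : ConvexBody (Euc n) :=
  (Metric.diam (A : Set (Euc n)))⁻¹ • (A + pt (-cheb A))

open Pointwise in
lemma nbody_coe (A : ConvexBody (Euc n)) :
    (nbody A : Set (Euc n))
      = (fun a => (Metric.diam (A : Set (Euc n)))⁻¹ • (a - cheb A)) '' (A : Set (Euc n)) := by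
  unfold nbody
  rw [ConvexBody.coe_smul, ConvexBody.coe_add]
  rw [show (pt (-cheb A) : Set (Euc n)) = {-cheb A} from rfl]
  rw [Set.add_singleton]
  ext x
  simp only [Set.mem_smul_set, Set.mem_image]
  constructor
  · rintro ⟨_, ⟨a, ha, rfl⟩, rfl⟩
    exact ⟨a, ha, by rw [sub_eq_add_neg]⟩
  · rintro ⟨a, ha, rfl⟩
    exact ⟨a + -cheb A, ⟨a, ha, rfl⟩, by rw [sub_eq_add_neg]⟩



/-- The orthogonal group as the matrix unitary group over `ℝ`. -/
abbrev On (n : ℕ) := Matrix.unitaryGroup (Fin n) ℝ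

variable {n : ℕ}

instance : Nonempty (On n) := ⟨1⟩

instance : IsTopologicalGroup (On n) where
  continuous_mul := by
    apply Continuous.subtype_mk
    exact (continuous_subtype_val.comp continuous_fst).matrix_mul
      (continuous_subtype_val.comp continuous_snd)
  continuous_inv := continuous_induced_rng.mpr (continuous_star.comp continuous_subtype_val)

instance : CompactSpace (On n) := by
  apply isCompact_iff_compactSpace.mp
  have hsub : (Matrix.unitaryGroup (Fin n) ℝ : Set (Matrix (Fin n) (Fin n) ℝ)) ⊆
      Set.univ.pi (fun _ : Fin n => Set.univ.pi fun _ : Fin n => Set.Icc (-1 : ℝ) 1) := by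
    intro M hM
    have h1 : M * star M = 1 := (Unitary.mem_iff.mp hM).2
    intro i _ j _
    have h2 : ∑ k, M i k * M i k = 1 := by
      have h3 := congrArg (fun N : Matrix (Fin n) (Fin n) ℝ => N i i) h1
      simpa [Matrix.mul_apply, Matrix.one_apply, Matrix.star_eq_conjTranspose,
        Matrix.conjTranspose_apply] using h3
    have h3 : M i j * M i j ≤ 1 := by
      rw [← h2]
      exact Finset.single_le_sum (f := fun k => M i k * M i k)
        (fun k _ => mul_self_nonneg _) (Finset.mem_univ j)
    constructor <;> nlinarith
  have hclosed : IsClosed (Matrix.unitaryGroup (Fin n) ℝ : Set (Matrix (Fin n) (Fin n) ℝ)) := by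
    have heq : (Matrix.unitaryGroup (Fin n) ℝ : Set (Matrix (Fin n) (Fin n) ℝ)) =
        {M | star M * M = 1} ∩ {M | M * star M = 1} := by
      ext M; exact Unitary.mem_iff
    rw [heq]
    exact (isClosed_eq (continuous_star.matrix_mul continuous_id) continuous_const).inter
      (isClosed_eq (continuous_id.matrix_mul continuous_star) continuous_const)
  exact (isCompact_univ_pi fun _ => isCompact_univ_pi fun _ => isCompact_Icc).of_isClosed_subset
    hclosed hsub

noncomputable instance : MeasurableSpace (On n) := borel _
instance : BorelSpace (On n) := ⟨rfl⟩

/-- Haar measure on the orthogonal group. -/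
noncomputable def haarO (n : ℕ) : Measure (On n) := Measure.haarMeasure ⊤

instance : (haarO n).IsMulLeftInvariant := Measure.isMulLeftInvariant_haarMeasure ⊤
instance : (haarO n).IsHaarMeasure := Measure.isHaarMeasure_haarMeasure ⊤
instance : IsFiniteMeasure (haarO n) := CompactSpace.isFiniteMeasure

lemma integrable_of_continuous {E : Type*} [NormedAddCommGroup E] {f : On n → E}
    (hf : Continuous f) : Integrable f (haarO n) := by
  apply hf.integrable_of_hasCompactSupport
  exact IsCompact.of_isClosed_subset isCompact_univ (isClosed_tsupport f) (Set.subset_univ _)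

/-- The action of an orthogonal matrix on Euclidean space. -/
noncomputable def act (σ : On n) : Euc n →L[ℝ] Euc n := Matrix.toEuclideanCLM (𝕜 := ℝ) σ.1

lemma act_eq_lin (σ : On n) (x : Euc n) : act σ x = Matrix.toEuclideanLin σ.1 x := by
  rw [act, ← Matrix.coe_toEuclideanCLM_eq_toEuclideanLin]
  rfl

lemma act_mul (σ τ : On n) (x : Euc n) : act (σ * τ) x = act σ (act τ x) := by
  unfold act
  rw [show ((σ * τ : On n) : Matrix (Fin n) (Fin n) ℝ) = σ.1 * τ.1 from rfl, map_mul]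
  rfl

lemma act_one (x : Euc n) : act (1 : On n) x = x := by
  unfold act
  rw [show ((1 : On n) : Matrix (Fin n) (Fin n) ℝ) = 1 from rfl, map_one]
  rfl

lemma act_inv_act (σ : On n) (x : Euc n) : act σ⁻¹ (act σ x) = x := by
  rw [← act_mul, inv_mul_cancel, act_one]

lemma act_act_inv (σ : On n) (x : Euc n) : act σ (act σ⁻¹ x) = x := by
  rw [← act_mul, mul_inv_cancel, act_one]

lemma act_surjective (σ : On n) : Function.Surjective (act σ) :=
  fun x => ⟨act σ⁻¹ x, act_act_inv σ x⟩

lemma toEuclideanLin_one (x : Euc n) : Matrix.toEuclideanLin (1 : Matrix (Fin n) (Fin n) ℝ) x = x := by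
  rw [Matrix.toEuclideanLin_apply]
  simp

lemma toEuclideanLin_mul (A B : Matrix (Fin n) (Fin n) ℝ) (x : Euc n) :
    Matrix.toEuclideanLin (A * B) x = Matrix.toEuclideanLin A (Matrix.toEuclideanLin B x) := by
  simp [Matrix.toEuclideanLin_apply, Matrix.mulVec_mulVec]

lemma inner_act (σ : On n) (x y : Euc n) :
    inner (𝕜 := ℝ) (act σ x) (act σ y) = inner (𝕜 := ℝ) x y := by
  rw [act_eq_lin, act_eq_lin]
  set T : Euc n →ₗ[ℝ] Euc n := Matrix.toEuclideanLin σ.1 with hT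
  have h1 : LinearMap.adjoint T (T x) = x := by
    have h2 : LinearMap.adjoint T = Matrix.toEuclideanLin (star σ.1) := by
      rw [hT, ← Matrix.toEuclideanLin_conjTranspose_eq_adjoint, Matrix.star_eq_conjTranspose]
    rw [h2, hT, ← toEuclideanLin_mul, (Unitary.mem_iff.mp σ.2).1, toEuclideanLin_one]
  calc inner (𝕜 := ℝ) (T x) (T y) = inner (𝕜 := ℝ) (LinearMap.adjoint T (T x)) y :=
        (LinearMap.adjoint_inner_left T y (T x)).symm
  _ = inner (𝕜 := ℝ) x y := by rw [h1]

lemma norm_act (σ : On n) (x : Euc n) : ‖act σ x‖ = ‖x‖ := by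
  have h := inner_act σ x x
  rw [real_inner_self_eq_norm_mul_norm, real_inner_self_eq_norm_mul_norm] at h
  nlinarith [norm_nonneg (act σ x), norm_nonneg x]

lemma isometry_act (σ : On n) : Isometry (act σ) :=
  AddMonoidHomClass.isometry_of_norm _ (norm_act σ)

lemma dist_act (σ : On n) (x y : Euc n) : dist (act σ x) (act σ y) = dist x y :=
  (isometry_act σ).dist_eq x y

/-- The action of an orthogonal matrix on convex bodies. -/
noncomputable def rotBody (σ : On n) (A : ConvexBody (Euc n)) : ConvexBody (Euc n) :=
  ⟨act σ '' A, A.convex.is_linear_image ⟨fun a b => map_add _ a b, fun r a => map_smul _ r a⟩,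
    A.isCompact.image (act σ).continuous, A.nonempty.image _⟩

lemma rotBody_coe (σ : On n) (A : ConvexBody (Euc n)) :
    (rotBody σ A : Set (Euc n)) = act σ '' (A : Set (Euc n)) := rfl

lemma rotBody_one (A : ConvexBody (Euc n)) : rotBody 1 A = A := by
  apply ConvexBody.ext
  rw [rotBody_coe]
  have : act (1 : On n) '' (A : Set (Euc n)) = id '' (A : Set (Euc n)) :=
    Set.image_congr fun a _ => act_one a
  simpa using this

lemma rotBody_mul (σ τ : On n) (A : ConvexBody (Euc n)) :
    rotBody σ (rotBody τ A) = rotBody (σ * τ) A := by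
  apply ConvexBody.ext
  rw [rotBody_coe, rotBody_coe, rotBody_coe, ← Set.image_comp]
  apply Set.image_congr
  intro a _
  exact (act_mul σ τ a).symm

lemma dist_rotBody (σ : On n) (A B : ConvexBody (Euc n)) :
    dist (rotBody σ A) (rotBody σ B) = dist A B := by
  rw [← ConvexBody.hausdorffDist_coe, ← ConvexBody.hausdorffDist_coe, rotBody_coe, rotBody_coe]
  exact Metric.hausdorffDist_image (isometry_act σ)

lemma norm_le_rad (A : ConvexBody (Euc n)) {a : Euc n} (ha : a ∈ (A : Set (Euc n))) :
    ‖a‖ ≤ rad A 0 := by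
  have := dist_le_rad A ha 0
  rwa [dist_comm, dist_zero_right] at this

lemma dist_rotBody_le (σ τ : On n) (A : ConvexBody (Euc n)) :
    dist (rotBody σ A) (rotBody τ A) ≤ ‖act σ - act τ‖ * rad A 0 := by
  rw [← ConvexBody.hausdorffDist_coe, rotBody_coe, rotBody_coe]
  have key : ∀ a ∈ (A : Set (Euc n)), dist (act σ a) (act τ a) ≤ ‖act σ - act τ‖ * rad A 0 := by
    intro a ha
    rw [dist_eq_norm]
    calc ‖act σ a - act τ a‖ = ‖(act σ - act τ) a‖ := by rw [ContinuousLinearMap.sub_apply]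
    _ ≤ ‖act σ - act τ‖ * ‖a‖ := (act σ - act τ).le_opNorm a
    _ ≤ ‖act σ - act τ‖ * rad A 0 :=
        mul_le_mul_of_nonneg_left (norm_le_rad A ha) (norm_nonneg _)
  apply hausdorffDist_le_of_mem_dist
  · exact mul_nonneg (norm_nonneg _) (rad_nonneg A 0)
  · rintro _ ⟨a, ha, rfl⟩
    exact ⟨act τ a, ⟨a, ha, rfl⟩, key a ha⟩
  · rintro _ ⟨a, ha, rfl⟩
    exact ⟨act σ a, ⟨a, ha, rfl⟩, by rw [dist_comm]; exact key a ha⟩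

lemma continuous_act : Continuous (fun σ : On n => act σ) := by
  have h1 : Continuous (fun M : Matrix (Fin n) (Fin n) ℝ =>
      (Matrix.toEuclideanCLM (𝕜 := ℝ) M : Euc n →L[ℝ] Euc n)) := by
    have : IsLinearMap ℝ (fun M : Matrix (Fin n) (Fin n) ℝ =>
        (Matrix.toEuclideanCLM (𝕜 := ℝ) M : Euc n →L[ℝ] Euc n)) :=
      ⟨fun a b => map_add _ a b, fun r a => map_smul _ r a⟩
    exact (this.mk' _).continuous_of_finiteDimensional
  exact h1.comp continuous_subtype_val

lemma continuous_rotBody_left (A : ConvexBody (Euc n)) :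
    Continuous (fun σ : On n => rotBody σ A) := by
  rw [continuous_iff_continuousAt]
  intro σ₀
  rw [ContinuousAt, Metric.tendsto_nhds]
  intro ε hε
  have hr0 : 0 ≤ rad A 0 := rad_nonneg A 0
  have hc : Continuous fun σ : On n => ‖act σ - act σ₀‖ :=
    (continuous_act.sub continuous_const).norm
  have hopen : IsOpen {σ : On n | ‖act σ - act σ₀‖ < ε / (rad A 0 + 1)} :=
    isOpen_lt hc continuous_const
  have hmem : σ₀ ∈ {σ : On n | ‖act σ - act σ₀‖ < ε / (rad A 0 + 1)} := by
    simp only [Set.mem_setOf_eq, sub_self, norm_zero]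
    positivity
  filter_upwards [hopen.mem_nhds hmem] with σ hσ
  have h1 := dist_rotBody_le σ σ₀ A
  calc dist (rotBody σ A) (rotBody σ₀ A) ≤ ‖act σ - act σ₀‖ * rad A 0 := h1
  _ ≤ ‖act σ - act σ₀‖ * (rad A 0 + 1) := by nlinarith [norm_nonneg (act σ - act σ₀)]
  _ < (ε / (rad A 0 + 1)) * (rad A 0 + 1) := mul_lt_mul_of_pos_right hσ (by positivity)
  _ = ε := by field_simp

/-- Construction of an orthogonal matrix from a norm-preserving linear map. -/
noncomputable def matOf (f : Euc n →ₗ[ℝ] Euc n) : Matrix (Fin n) (Fin n) ℝ :=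
  LinearMap.toMatrix (EuclideanSpace.basisFun (Fin n) ℝ).toBasis
    (EuclideanSpace.basisFun (Fin n) ℝ).toBasis f

lemma toEuclideanLin_matOf (f : Euc n →ₗ[ℝ] Euc n) :
    Matrix.toEuclideanLin (matOf f) = f := by
  rw [Matrix.toEuclideanLin_eq_toLin_orthonormal, matOf, Matrix.toLin_toMatrix]

lemma matOf_mem (f : Euc n →ₗ[ℝ] Euc n) (hf : ∀ x, ‖f x‖ = ‖x‖) :
    matOf f ∈ Matrix.unitaryGroup (Fin n) ℝ := by
  rw [Matrix.mem_unitaryGroup_iff']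
  apply (Matrix.toEuclideanLin (𝕜 := ℝ) (m := Fin n) (n := Fin n)).injective
  apply LinearMap.ext
  intro x
  rw [toEuclideanLin_mul]
  rw [show (Matrix.toEuclideanLin (star (matOf f))) = LinearMap.adjoint (Matrix.toEuclideanLin (matOf f)) by
    rw [Matrix.star_eq_conjTranspose, Matrix.toEuclideanLin_conjTranspose_eq_adjoint]]
  rw [toEuclideanLin_matOf, toEuclideanLin_one]
  apply ext_inner_right ℝ
  intro y
  rw [LinearMap.adjoint_inner_left]
  exact (LinearIsometry.inner_map_map ⟨f, hf⟩ x y)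

/-- The orthogonal group element associated to a norm-preserving linear map. -/
noncomputable def onOf (f : Euc n →ₗ[ℝ] Euc n) (hf : ∀ x, ‖f x‖ = ‖x‖) : On n :=
  ⟨matOf f, matOf_mem f hf⟩

lemma act_onOf (f : Euc n →ₗ[ℝ] Euc n) (hf : ∀ x, ‖f x‖ = ‖x‖) (x : Euc n) :
    act (onOf f hf) x = f x := by
  rw [act_eq_lin, onOf, toEuclideanLin_matOf]



/-- The bump weight. -/
noncomputable def uu (a : ℝ) (N X : ConvexBody (Euc n)) : ℝ := max (a - dist X N) 0

lemma uu_nonneg (a : ℝ) (N X : ConvexBody (Euc n)) : 0 ≤ uu a N X := le_max_right _ _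

lemma uu_le (a : ℝ) (ha : 0 ≤ a) (N X : ConvexBody (Euc n)) : uu a N X ≤ a :=
  max_le (by linarith [dist_nonneg (x := X) (y := N)]) ha

lemma uu_lipschitz (a : ℝ) (N X Y : ConvexBody (Euc n)) :
    |uu a N X - uu a N Y| ≤ dist X Y := by
  have h := abs_dist_sub_le X Y N
  have h1 := abs_max_sub_max_le_abs (a - dist X N) (a - dist Y N) 0
  have h2 : |a - dist X N - (a - dist Y N)| = |dist X N - dist Y N| := by
    rw [show a - dist X N - (a - dist Y N) = -(dist X N - dist Y N) by ring, abs_neg]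
  unfold uu
  calc |max (a - dist X N) 0 - max (a - dist Y N) 0| ≤ |a - dist X N - (a - dist Y N)| := h1
  _ = |dist X N - dist Y N| := h2
  _ ≤ dist X Y := h

lemma uu_pos_iff (a : ℝ) (N X : ConvexBody (Euc n)) : 0 < uu a N X ↔ dist X N < a := by
  unfold uu
  rw [lt_max_iff]
  constructor
  · rintro (h | h) <;> [linarith; linarith]
  · intro h; left; linarith

section Averaging

variable (a : ℝ) (N : ConvexBody (Euc n))

/-- The weight of `σ` relative to body `X`. -/
noncomputable def wt (X : ConvexBody (Euc n)) (σ : On n) : ℝ := uu a N (rotBody σ⁻¹ X)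

lemma continuous_wt (X : ConvexBody (Euc n)) : Continuous (wt a N X) := by
  unfold wt uu
  apply Continuous.max _ continuous_const
  apply Continuous.sub continuous_const
  exact (continuous_dist.comp
    ((((continuous_rotBody_left X).comp continuous_inv).prodMk continuous_const)))

lemma continuous_actp (p : Euc n) : Continuous (fun σ : On n => act σ p) := by
  exact (isBoundedBilinearMap_apply.continuous).comp (continuous_act.prodMk continuous_const)

/-- The averaged weight. -/
noncomputable def Dint (X : ConvexBody (Euc n)) : ℝ := ∫ σ, wt a N X σ ∂(haarO n)

/-- The averaged image of a point `p`. -/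
noncomputable def Gint (p : Euc n) (X : ConvexBody (Euc n)) : Euc n :=
  ∫ σ, wt a N X σ • act σ p ∂(haarO n)

lemma integrable_wt (X : ConvexBody (Euc n)) : Integrable (wt a N X) (haarO n) :=
  integrable_of_continuous (continuous_wt a N X)

lemma integrable_wt_smul (p : Euc n) (X : ConvexBody (Euc n)) :
    Integrable (fun σ => wt a N X σ • act σ p) (haarO n) :=
  integrable_of_continuous ((continuous_wt a N X).smul (continuous_actp p))

lemma wt_rot (X : ConvexBody (Euc n)) (τ σ : On n) :
    wt a N (rotBody τ X) σ = wt a N X (τ⁻¹ * σ) := by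
  unfold wt
  rw [rotBody_mul]
  congr 2
  group

lemma Dint_rot (X : ConvexBody (Euc n)) (τ : On n) : Dint a N (rotBody τ X) = Dint a N X := by
  unfold Dint
  calc ∫ σ, wt a N (rotBody τ X) σ ∂(haarO n) = ∫ σ, wt a N X (τ⁻¹ * σ) ∂(haarO n) := by
        congr 1; funext σ; exact wt_rot a N X τ σ
  _ = ∫ σ, wt a N X σ ∂(haarO n) := integral_mul_left_eq_self _ τ⁻¹

lemma Gint_rot (p : Euc n) (X : ConvexBody (Euc n)) (τ : On n) :
    Gint a N p (rotBody τ X) = act τ (Gint a N p X) := by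
  unfold Gint
  have key : (fun σ => wt a N (rotBody τ X) σ • act σ p)
      = fun σ => (fun ρ => wt a N X ρ • act (τ * ρ) p) (τ⁻¹ * σ) := by
    funext σ
    rw [wt_rot]
    congr 2
    group
  rw [key, integral_mul_left_eq_self (fun ρ => wt a N X ρ • act (τ * ρ) p) τ⁻¹]
  have key2 : (fun ρ => wt a N X ρ • act (τ * ρ) p) = fun ρ => act τ (wt a N X ρ • act ρ p) := by
    funext ρ
    rw [act_mul, (act τ).map_smul]
  rw [key2]
  exact (act τ).integral_comp_comm (integrable_wt_smul a N p X)

lemma Dint_nonneg (X : ConvexBody (Euc n)) : 0 ≤ Dint a N X :=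
  integral_nonneg fun σ => uu_nonneg _ _ _

lemma Dint_lipschitz (X Y : ConvexBody (Euc n)) :
    |Dint a N X - Dint a N Y| ≤ dist X Y * (haarO n Set.univ).toReal := by
  unfold Dint
  rw [← integral_sub (integrable_wt a N X) (integrable_wt a N Y)]
  calc |∫ σ, (wt a N X σ - wt a N Y σ) ∂(haarO n)|
      ≤ ∫ σ, |wt a N X σ - wt a N Y σ| ∂(haarO n) := by
        rw [← Real.norm_eq_abs]
        refine (norm_integral_le_integral_norm _).trans (le_of_eq ?_)
        congr 1
  _ ≤ ∫ _σ, dist X Y ∂(haarO n) := by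
        apply integral_mono _ (integrable_const _)
        · intro σ
          unfold wt
          have := uu_lipschitz a N (rotBody σ⁻¹ X) (rotBody σ⁻¹ Y)
          rwa [dist_rotBody] at this
        · exact ((integrable_wt a N X).sub (integrable_wt a N Y)).abs
  _ = dist X Y * (haarO n Set.univ).toReal := by
        rw [integral_const, smul_eq_mul, mul_comm, measureReal_def]

lemma Gint_lipschitz (p : Euc n) (X Y : ConvexBody (Euc n)) :
    ‖Gint a N p X - Gint a N p Y‖ ≤ dist X Y * ‖p‖ * (haarO n Set.univ).toReal := by
  unfold Gint
  rw [← integral_sub (integrable_wt_smul a N p X) (integrable_wt_smul a N p Y)]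
  calc ‖∫ σ, (wt a N X σ • act σ p - wt a N Y σ • act σ p) ∂(haarO n)‖
      ≤ ∫ σ, ‖wt a N X σ • act σ p - wt a N Y σ • act σ p‖ ∂(haarO n) :=
        norm_integral_le_integral_norm _
  _ ≤ ∫ _σ, dist X Y * ‖p‖ ∂(haarO n) := by
        apply integral_mono _ (integrable_const _)
        · intro σ
          show ‖wt a N X σ • act σ p - wt a N Y σ • act σ p‖ ≤ dist X Y * ‖p‖
          rw [← sub_smul, norm_smul]
          have h1 : |wt a N X σ - wt a N Y σ| ≤ dist X Y := by
            unfold wt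
            have := uu_lipschitz a N (rotBody σ⁻¹ X) (rotBody σ⁻¹ Y)
            rwa [dist_rotBody] at this
          rw [norm_act]
          exact mul_le_mul_of_nonneg_right (by rwa [Real.norm_eq_abs]) (norm_nonneg p)
            |>.trans (le_refl _)
        · exact (((integrable_wt_smul a N p X).sub (integrable_wt_smul a N p Y)).norm)
  _ = dist X Y * ‖p‖ * (haarO n Set.univ).toReal := by
        rw [integral_const, smul_eq_mul, measureReal_def]; ring

lemma continuous_Dint : Continuous (Dint a N) := by
  apply (LipschitzWith.of_dist_le_mul (K := (haarO n Set.univ).toReal.toNNReal) ?_).continuous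
  intro X Y
  rw [Real.dist_eq]
  calc |Dint a N X - Dint a N Y| ≤ dist X Y * (haarO n Set.univ).toReal := Dint_lipschitz a N X Y
  _ ≤ ((haarO n Set.univ).toReal.toNNReal : ℝ) * dist X Y := by
      rw [mul_comm]
      apply mul_le_mul_of_nonneg_right _ dist_nonneg
      exact Real.le_coe_toNNReal _

lemma continuous_Gint (p : Euc n) : Continuous (Gint a N p) := by
  apply (LipschitzWith.of_dist_le_mul
    (K := (‖p‖ * (haarO n Set.univ).toReal).toNNReal) ?_).continuous
  intro X Y
  rw [dist_eq_norm]
  calc ‖Gint a N p X - Gint a N p Y‖ ≤ dist X Y * ‖p‖ * (haarO n Set.univ).toReal :=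
        Gint_lipschitz a N p X Y
  _ ≤ ((‖p‖ * (haarO n Set.univ).toReal).toNNReal : ℝ) * dist X Y := by
      have h := Real.le_coe_toNNReal (‖p‖ * (haarO n Set.univ).toReal)
      have hd : (0:ℝ) ≤ dist X Y := dist_nonneg
      calc dist X Y * ‖p‖ * (haarO n Set.univ).toReal
          = (‖p‖ * (haarO n Set.univ).toReal) * dist X Y := by ring
      _ ≤ ((‖p‖ * (haarO n Set.univ).toReal).toNNReal : ℝ) * dist X Y :=
          mul_le_mul_of_nonneg_right h hd

lemma Dint_pos (ha : 0 < a) : 0 < Dint a N N := by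
  have hsub : {σ : On n | dist (rotBody σ⁻¹ N) N < a} ⊆ Function.support (wt a N N) := by
    intro σ hσ
    exact ((uu_pos_iff a N _).mpr hσ).ne'
  have hopen : IsOpen {σ : On n | dist (rotBody σ⁻¹ N) N < a} := by
    apply isOpen_lt _ continuous_const
    exact continuous_dist.comp
      ((((continuous_rotBody_left N).comp continuous_inv).prodMk continuous_const))
  have hne : (1 : On n) ∈ {σ : On n | dist (rotBody σ⁻¹ N) N < a} := by
    simp only [Set.mem_setOf_eq, inv_one, rotBody_one, dist_self]
    exact ha
  have hsupp : (0:ENNReal) < haarO n (Function.support (wt a N N)) :=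
    lt_of_lt_of_le (hopen.measure_pos _ ⟨1, hne⟩) (measure_mono hsub)
  exact (integral_pos_iff_support_of_nonneg (fun σ => uu_nonneg _ _ _)
    (integrable_wt a N N)).mpr hsupp

lemma Gint_add (p q : Euc n) (X : ConvexBody (Euc n)) :
    Gint a N (p + q) X = Gint a N p X + Gint a N q X := by
  unfold Gint
  rw [← integral_add (integrable_wt_smul a N p X) (integrable_wt_smul a N q X)]
  congr 1
  funext σ
  rw [_root_.map_add, smul_add]

lemma Gint_smul (r : ℝ) (p : Euc n) (X : ConvexBody (Euc n)) :
    Gint a N (r • p) X = r • Gint a N p X := by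
  unfold Gint
  rw [← integral_smul]
  congr 1
  funext σ
  rw [_root_.map_smul, smul_comm]

end Averaging



/-- The subspace of vectors fixed by the stabilizer of `N` in the orthogonal group. -/
noncomputable def Wfix (N : ConvexBody (Euc n)) : Submodule ℝ (Euc n) where
  carrier := {w | ∀ σ : On n, rotBody σ N = N → act σ w = w}
  add_mem' := fun {a b} ha hb σ hσ => by rw [_root_.map_add, ha σ hσ, hb σ hσ]
  zero_mem' := fun σ _ => map_zero _
  smul_mem' := fun r w hw σ hσ => by rw [_root_.map_smul, hw σ hσ]

lemma mem_Wfix {N : ConvexBody (Euc n)} {w : Euc n} :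
    w ∈ Wfix N ↔ ∀ σ : On n, rotBody σ N = N → act σ w = w := Iff.rfl

lemma exists_good_a (N : ConvexBody (Euc n)) :
    ∃ a > 0, ∀ σ : On n, dist (rotBody σ⁻¹ N) N < a →
      ∀ w ∈ Wfix N, ‖act σ w - w‖ ≤ 2⁻¹ * ‖w‖ := by
  classical
  -- the compact set of rotations moving some unit vector of `Wfix N` a lot
  set S : Set (On n × Euc n) :=
    (Set.univ ×ˢ ((Wfix N : Set (Euc n)) ∩ Metric.closedBall 0 1)) ∩
      {q : On n × Euc n | 2⁻¹ ≤ ‖act q.1 q.2 - q.2‖} with hS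
  have hact2 : Continuous fun q : On n × Euc n => act q.1 q.2 :=
    isBoundedBilinearMap_apply.continuous.comp ((continuous_act.comp continuous_fst).prodMk
      continuous_snd)
  have hScpt : IsCompact S := by
    apply IsCompact.inter_right
    · exact isCompact_univ.prod (((isCompact_closedBall 0 1).inter_left
        (Wfix N).closed_of_finiteDimensional))
    · exact isClosed_le continuous_const ((hact2.sub continuous_snd).norm)
  set C : Set (On n) := Prod.fst '' S with hC
  have hCcpt : IsCompact C := hScpt.image continuous_fst
  have hCnotfix : ∀ ρ ∈ C, rotBody ρ N ≠ N := by
    rintro ρ ⟨⟨ρ', w⟩, ⟨⟨_, hw, _⟩, hmove⟩, rfl⟩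
    intro hfix
    have : act ρ' w = w := hw ρ' hfix
    rw [Set.mem_setOf_eq, this, sub_self, norm_zero] at hmove
    norm_num at hmove
  have key : ∃ a > 0, ∀ ρ ∈ C, a ≤ dist (rotBody ρ N) N := by
    by_cases hne : C.Nonempty
    · obtain ⟨ρ₀, hρ₀, hmin⟩ := hCcpt.exists_isMinOn hne
        ((continuous_dist.comp ((continuous_rotBody_left N).prodMk
          continuous_const)).continuousOn)
      refine ⟨dist (rotBody ρ₀ N) N, ?_, fun ρ hρ => hmin hρ⟩
      exact dist_pos.mpr (by
        intro h
        exact hCnotfix ρ₀ hρ₀ h)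
    · exact ⟨1, one_pos, fun ρ hρ => absurd ⟨ρ, hρ⟩ hne⟩
  obtain ⟨a, ha, hamin⟩ := key
  refine ⟨a, ha, fun σ hσ w hwW => ?_⟩
  have hρC : σ⁻¹ ∉ C := fun hmem => absurd hσ (not_lt.mpr (hamin _ hmem))
  rcases eq_or_ne w 0 with rfl | hw0
  · simp
  -- normalize w
  set w' : Euc n := ‖w‖⁻¹ • w with hw'
  have hw'W : w' ∈ Wfix N := (Wfix N).smul_mem _ hwW
  have hw'1 : ‖w'‖ ≤ 1 := by
    rw [hw', norm_smul, norm_inv, norm_norm, inv_mul_cancel₀ (norm_ne_zero_iff.mpr hw0)]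
  have hmove : ¬ (2⁻¹ ≤ ‖act σ⁻¹ w' - w'‖) := by
    intro hge
    exact hρC ⟨(σ⁻¹, w'), ⟨⟨Set.mem_univ _, hw'W, by simpa [Metric.mem_closedBall] using hw'1⟩,
      hge⟩, rfl⟩
  push_neg at hmove
  have hinv : ‖act σ⁻¹ w - w‖ ≤ 2⁻¹ * ‖w‖ := by
    have hsm : act σ⁻¹ w - w = ‖w‖ • (act σ⁻¹ w' - w') := by
      rw [hw', smul_sub, _root_.map_smul, smul_smul, smul_smul,
        mul_inv_cancel₀ (norm_ne_zero_iff.mpr hw0), one_smul, one_smul]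
    rw [hsm, norm_smul, norm_norm]
    calc ‖w‖ * ‖act σ⁻¹ w' - w'‖ ≤ ‖w‖ * 2⁻¹ :=
          mul_le_mul_of_nonneg_left hmove.le (norm_nonneg w)
    _ = 2⁻¹ * ‖w‖ := mul_comm _ _
  -- transfer σ⁻¹ to σ
  have : ‖act σ w - w‖ = ‖act σ⁻¹ (act σ w - w)‖ := (norm_act σ⁻¹ _).symm
  rw [this, map_sub, act_inv_act, norm_sub_rev]
  exact hinv

lemma Gint_mem_Wfix (a : ℝ) (N : ConvexBody (Euc n)) {w : Euc n} :
    Gint a N w N ∈ Wfix N := by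
  intro σ hσ
  have h := Gint_rot a N w N σ
  rw [hσ] at h
  exact h.symm

lemma Gint_bound (a : ℝ) (N : ConvexBody (Euc n))
    (hgood : ∀ σ : On n, dist (rotBody σ⁻¹ N) N < a →
      ∀ w ∈ Wfix N, ‖act σ w - w‖ ≤ 2⁻¹ * ‖w‖)
    {w : Euc n} (hw : w ∈ Wfix N) :
    ‖Gint a N w N - Dint a N N • w‖ ≤ 2⁻¹ * ‖w‖ * Dint a N N := by
  have h1 : Dint a N N • w = ∫ σ, wt a N N σ • w ∂(haarO n) := by
    rw [integral_smul_const, Dint]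
  rw [Gint, h1, ← MeasureTheory.integral_sub (integrable_wt_smul a N w N)
    (by exact integrable_of_continuous ((continuous_wt a N N).smul continuous_const) :
      Integrable (fun σ => wt a N N σ • w) (haarO n))]
  calc ‖∫ σ, (wt a N N σ • act σ w - wt a N N σ • w) ∂(haarO n)‖
      ≤ ∫ σ, ‖wt a N N σ • act σ w - wt a N N σ • w‖ ∂(haarO n) :=
        MeasureTheory.norm_integral_le_integral_norm _
  _ ≤ ∫ σ, wt a N N σ * (2⁻¹ * ‖w‖) ∂(haarO n) := by
      apply MeasureTheory.integral_mono ?hf ?hg ?hle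
      case hf =>
        exact (integrable_of_continuous (((continuous_wt a N N).smul
          (continuous_actp w)).sub ((continuous_wt a N N).smul continuous_const))).norm
      case hg => exact integrable_of_continuous ((continuous_wt a N N).mul continuous_const)
      case hle =>
        intro σ
        show ‖wt a N N σ • act σ w - wt a N N σ • w‖ ≤ wt a N N σ * (2⁻¹ * ‖w‖)
        rw [← smul_sub, norm_smul, Real.norm_eq_abs,
          abs_of_nonneg (show (0:ℝ) ≤ wt a N N σ from uu_nonneg _ _ _)]
        rcases eq_or_lt_of_le (uu_nonneg a N (rotBody σ⁻¹ N)) with h0 | hpos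
        · rw [show wt a N N σ = 0 from h0.symm]
          simp
        · apply mul_le_mul_of_nonneg_left _ (uu_nonneg _ _ _)
          exact hgood σ ((uu_pos_iff a N _).mp hpos) w hw
  _ = 2⁻¹ * ‖w‖ * Dint a N N := by
      rw [MeasureTheory.integral_mul_const, Dint]
      ring

lemma exists_pvec (N : ConvexBody (Euc n)) {v : Euc n} (hv : v ∈ Wfix N)
    {a : ℝ} (ha : 0 < a)
    (hgood : ∀ σ : On n, dist (rotBody σ⁻¹ N) N < a →
      ∀ w ∈ Wfix N, ‖act σ w - w‖ ≤ 2⁻¹ * ‖w‖) :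
    ∃ p, p ∈ Wfix N ∧ (Dint a N N)⁻¹ • Gint a N p N = v := by
  set D := Dint a N N with hD
  have hDpos : 0 < D := Dint_pos a N ha
  set L : Wfix N →ₗ[ℝ] Wfix N :=
    { toFun := fun w => ⟨D⁻¹ • Gint a N w.1 N, (Wfix N).smul_mem _ (Gint_mem_Wfix a N)⟩
      map_add' := fun w₁ w₂ => by
        apply Subtype.ext
        show D⁻¹ • Gint a N (w₁.1 + w₂.1) N = D⁻¹ • Gint a N w₁.1 N + D⁻¹ • Gint a N w₂.1 N
        rw [Gint_add, smul_add]
      map_smul' := fun r w => by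
        apply Subtype.ext
        show D⁻¹ • Gint a N (r • w.1) N = r • (D⁻¹ • Gint a N w.1 N)
        rw [Gint_smul, smul_comm] } with hL
  have hLdist : ∀ w : Wfix N, ‖(L w : Euc n) - w.1‖ ≤ 2⁻¹ * ‖w.1‖ := by
    intro w
    have h1 : (L w : Euc n) - w.1 = D⁻¹ • (Gint a N w.1 N - D • w.1) := by
      rw [smul_sub, smul_smul, inv_mul_cancel₀ hDpos.ne', one_smul]
      rfl
    rw [h1, norm_smul, norm_inv, Real.norm_eq_abs, abs_of_pos hDpos]
    have h2 := Gint_bound a N hgood w.2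
    rw [← hD] at h2
    calc D⁻¹ * ‖Gint a N w.1 N - D • w.1‖ ≤ D⁻¹ * (2⁻¹ * ‖w.1‖ * D) :=
          mul_le_mul_of_nonneg_left h2 (by positivity)
    _ = 2⁻¹ * ‖w.1‖ := by field_simp
  have hinj : Function.Injective L := by
    rw [injective_iff_map_eq_zero]
    intro w hw
    have := hLdist w
    rw [hw] at this
    simp only [ZeroMemClass.coe_zero, zero_sub, norm_neg] at this
    have hnn : ‖w.1‖ = 0 := by linarith [norm_nonneg w.1]
    exact Subtype.ext (norm_eq_zero.mp hnn)
  have hsurj : Function.Surjective L := (LinearMap.injective_iff_surjective).mp hinj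
  obtain ⟨p, hp⟩ := hsurj ⟨v, hv⟩
  exact ⟨p.1, p.2, congrArg Subtype.val hp⟩



/-- The invariant distance from `X` to the orthogonal orbit of `N`. -/
noncomputable def dinv (N X : ConvexBody (Euc n)) : ℝ := ⨅ σ : On n, dist X (rotBody σ N)

lemma dinv_bddBelow (N X : ConvexBody (Euc n)) :
    BddBelow (Set.range fun σ : On n => dist X (rotBody σ N)) := by
  refine ⟨0, ?_⟩
  rintro _ ⟨σ, rfl⟩
  exact dist_nonneg

lemma dinv_nonneg (N X : ConvexBody (Euc n)) : 0 ≤ dinv N X :=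
  Real.iInf_nonneg fun σ => dist_nonneg

lemma dinv_le (N X : ConvexBody (Euc n)) (σ : On n) : dinv N X ≤ dist X (rotBody σ N) :=
  ciInf_le (dinv_bddBelow N X) σ

lemma dinv_self (N : ConvexBody (Euc n)) : dinv N N = 0 := by
  apply le_antisymm _ (dinv_nonneg N N)
  have := dinv_le N N 1
  rwa [rotBody_one, dist_self] at this

lemma dinv_rot (N X : ConvexBody (Euc n)) (τ : On n) : dinv N (rotBody τ X) = dinv N X := by
  apply le_antisymm
  · apply le_ciInf
    intro ρ
    have h := dinv_le N (rotBody τ X) (τ * ρ)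
    rwa [← rotBody_mul, dist_rotBody] at h
  · apply le_ciInf
    intro σ
    have h := dinv_le N X (τ⁻¹ * σ)
    have h2 : dist X (rotBody (τ⁻¹ * σ) N) = dist (rotBody τ X) (rotBody σ N) := by
      rw [← rotBody_mul, ← dist_rotBody τ X (rotBody τ⁻¹ (rotBody σ N)), rotBody_mul,
        mul_inv_cancel, rotBody_one]
    rwa [h2] at h

lemma dinv_lipschitz (N X Y : ConvexBody (Euc n)) : dinv N X ≤ dinv N Y + dist X Y := by
  have h : ∀ σ : On n, dinv N X - dist X Y ≤ dist Y (rotBody σ N) := by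
    intro σ
    have h1 := dinv_le N X σ
    have h2 := dist_triangle X Y (rotBody σ N)
    linarith
  have h2 : dinv N X - dist X Y ≤ dinv N Y := le_ciInf h
  linarith

lemma continuous_dinv (N : ConvexBody (Euc n)) : Continuous (dinv N) := by
  apply (LipschitzWith.of_dist_le_mul (K := 1) ?_).continuous
  intro X Y
  rw [NNReal.coe_one, one_mul, Real.dist_eq, abs_sub_le_iff]
  constructor <;> [skip; rw [dist_comm X Y]] <;>
    linarith [dinv_lipschitz N X Y, dinv_lipschitz N Y X]

lemma dinv_eq_zero {N X : ConvexBody (Euc n)} (h : dinv N X = 0) :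
    ∃ σ : On n, rotBody σ N = X := by
  obtain ⟨σ₀, _, hmin⟩ := isCompact_univ.exists_isMinOn (Set.univ_nonempty)
    (f := fun σ : On n => dist X (rotBody σ N))
    ((continuous_dist.comp (continuous_const.prodMk (continuous_rotBody_left N))).continuousOn)
  have h1 : dist X (rotBody σ₀ N) ≤ dinv N X := by
    apply le_ciInf
    intro σ
    exact hmin (Set.mem_univ σ)
  rw [h] at h1
  have h2 : dist X (rotBody σ₀ N) = 0 := le_antisymm h1 dist_nonneg
  exact ⟨σ₀, (dist_eq_zero.mp h2).symm⟩

/-- The invariant bump function. -/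
noncomputable def chi (ε : ℝ) (N X : ConvexBody (Euc n)) : ℝ := max (1 - dinv N X / ε) 0

lemma chi_self (ε : ℝ) (N : ConvexBody (Euc n)) : chi ε N N = 1 := by
  unfold chi
  rw [dinv_self]
  norm_num

lemma chi_rot (ε : ℝ) (N X : ConvexBody (Euc n)) (τ : On n) :
    chi ε N (rotBody τ X) = chi ε N X := by
  unfold chi
  rw [dinv_rot]

lemma chi_of_le {ε : ℝ} (hε : 0 < ε) {N X : ConvexBody (Euc n)} (h : ε ≤ dinv N X) :
    chi ε N X = 0 := by
  unfold chi
  apply max_eq_right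
  have : 1 ≤ dinv N X / ε := (one_le_div hε).mpr h
  linarith

lemma continuous_chi (ε : ℝ) (N : ConvexBody (Euc n)) : Continuous (chi ε N) :=
  ((continuous_const.sub ((continuous_dinv N).div_const ε)).max continuous_const)

/-- The `j`-th term of the equivariant field: bump × normalized average. -/
noncomputable def term (a ε : ℝ) (N : ConvexBody (Euc n)) (p : Euc n)
    (X : ConvexBody (Euc n)) : Euc n :=
  (chi ε N X * (max (Dint a N X) (Dint a N N / 2))⁻¹) • Gint a N p X

lemma term_rot (a ε : ℝ) (N : ConvexBody (Euc n)) (p : Euc n) (X : ConvexBody (Euc n))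
    (τ : On n) : term a ε N p (rotBody τ X) = act τ (term a ε N p X) := by
  unfold term
  rw [chi_rot, Dint_rot, Gint_rot, _root_.map_smul]

lemma term_self (a ε : ℝ) (ha : 0 < a) (N : ConvexBody (Euc n)) (p : Euc n) :
    term a ε N p N = (Dint a N N)⁻¹ • Gint a N p N := by
  unfold term
  rw [chi_self, max_eq_left (by linarith [Dint_pos a N ha]), one_mul]

lemma term_zero {a ε : ℝ} (hε : 0 < ε) {N X : ConvexBody (Euc n)} (p : Euc n)
    (h : ε ≤ dinv N X) : term a ε N p X = 0 := by
  unfold term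
  rw [chi_of_le hε h, zero_mul, zero_smul]

lemma continuous_term (a ε : ℝ) (ha : 0 < a) (N : ConvexBody (Euc n)) (p : Euc n) :
    Continuous (term a ε N p) := by
  have hD := Dint_pos a N ha
  have hne : ∀ X, max (Dint a N X) (Dint a N N / 2) ≠ 0 := by
    intro X
    have : Dint a N N / 2 ≤ max (Dint a N X) (Dint a N N / 2) := le_max_right _ _
    positivity
  exact (((continuous_chi ε N).mul (((continuous_Dint a N).max continuous_const).inv₀
    hne)).smul (continuous_Gint a N p))

end S17

/-- The group `Sim(n)` of similarities of `ℝⁿ`, as a subgroup of the group of invertible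
affine transformations: those affine equivalences that scale all distances by a fixed positive
ratio (equivalently, maps `x ↦ u + λ σ x` with `λ > 0` and `σ` orthogonal). -/
noncomputable def Sim (n : ℕ) : Subgroup (Euc n ≃ᵃ[ℝ] Euc n) where
  carrier := {g | ∃ r : ℝ, 0 < r ∧ ∀ x y : Euc n, dist (g x) (g y) = r * dist x y}
  one_mem' := ⟨1, one_pos, fun x y => by simp⟩
  mul_mem' := by
    rintro a b ⟨r, hr, hra⟩ ⟨s, hs, hsb⟩
    refine ⟨r * s, mul_pos hr hs, fun x y => ?_⟩
    show dist (a (b x)) (a (b y)) = r * s * dist x y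
    rw [hra, hsb, mul_assoc]
  inv_mem' := by
    rintro a ⟨r, hr, hra⟩
    refine ⟨r⁻¹, inv_pos.mpr hr, fun x y => ?_⟩
    have h := hra (a⁻¹ x) (a⁻¹ y)
    have hx : a (a⁻¹ x) = x := a.apply_symm_apply x
    have hy : a (a⁻¹ y) = y := a.apply_symm_apply y
    rw [hx, hy] at h
    show dist (a⁻¹ x) (a⁻¹ y) = r⁻¹ * dist x y
    rw [h]
    field_simp

/-- The affine dimension of a subset of `ℝⁿ`. -/
noncomputable def affDim {n : ℕ} (s : Set (Euc n)) : ℕ :=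
  Module.finrank ℝ (affineSpan ℝ s).direction

/-- The space `𝒦ⁿ_{i⁺}` of nonempty compact convex subsets of `ℝⁿ` of affine dimension at
least `i`, with the Hausdorff metric. -/
abbrev Kplus (n i : ℕ) := {K : ConvexBody (Euc n) // i ≤ affDim (K : Set (Euc n))}

namespace S17
variable {n : ℕ}

/-- The affine equivalence of an orthogonal matrix. -/
noncomputable def actAE (σ : On n) : Euc n ≃ᵃ[ℝ] Euc n :=
  (LinearEquiv.ofLinear (act σ).toLinearMap (act σ⁻¹).toLinearMap
    (LinearMap.ext fun x => act_act_inv σ x) (LinearMap.ext fun x => act_inv_act σ x)).toAffineEquiv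

lemma actAE_apply (σ : On n) (x : Euc n) : actAE σ x = act σ x := rfl

/-- Scaling as an affine equivalence. -/
noncomputable def smulAE {d : ℝ} (hd : d ≠ 0) : Euc n ≃ᵃ[ℝ] Euc n :=
  (LinearEquiv.smulOfNeZero ℝ (Euc n) d hd).toAffineEquiv

lemma smulAE_apply {d : ℝ} (hd : d ≠ 0) (x : Euc n) : smulAE hd x = d • x := rfl

/-- The similarity with rotation part `σ`, source center/scale `c₁, d₁` and
target center/scale `c₂, d₂`. -/
noncomputable def simOf (σ : On n) (c₁ c₂ : Euc n) {d₁ d₂ : ℝ} (h₁ : d₁ ≠ 0) (h₂ : d₂ ≠ 0) :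
    Euc n ≃ᵃ[ℝ] Euc n :=
  ((((AffineEquiv.constVAdd ℝ (Euc n) (-c₁)).trans (smulAE (inv_ne_zero h₁))).trans
    (actAE σ)).trans (smulAE h₂)).trans (AffineEquiv.constVAdd ℝ (Euc n) c₂)

lemma simOf_apply (σ : On n) (c₁ c₂ : Euc n) {d₁ d₂ : ℝ} (h₁ : d₁ ≠ 0) (h₂ : d₂ ≠ 0)
    (x : Euc n) : simOf σ c₁ c₂ h₁ h₂ x = c₂ + d₂ • act σ (d₁⁻¹ • (x - c₁)) := by
  show c₂ +ᵥ (d₂ • act σ (d₁⁻¹ • ((-c₁) +ᵥ x))) = c₂ + d₂ • act σ (d₁⁻¹ • (x - c₁))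
  rw [vadd_eq_add, vadd_eq_add, neg_add_eq_sub]

lemma simOf_mem (σ : On n) (c₁ c₂ : Euc n) {d₁ d₂ : ℝ} (hd₁ : 0 < d₁) (hd₂ : 0 < d₂) :
    simOf σ c₁ c₂ hd₁.ne' hd₂.ne' ∈ Sim n := by
  refine ⟨d₂ / d₁, by positivity, fun x y => ?_⟩
  rw [simOf_apply, simOf_apply, dist_eq_norm, dist_eq_norm]
  have h1 : (c₂ + d₂ • act σ (d₁⁻¹ • (x - c₁))) - (c₂ + d₂ • act σ (d₁⁻¹ • (y - c₁)))
      = d₂ • act σ (d₁⁻¹ • (x - y)) := by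
    rw [add_sub_add_left_eq_sub, ← smul_sub, ← map_sub, ← smul_sub]
    congr 2
    abel
  rw [h1, norm_smul, norm_act, norm_smul, Real.norm_eq_abs, Real.norm_eq_abs,
    abs_of_pos hd₂, abs_of_pos (inv_pos.mpr hd₁)]
  rw [div_eq_mul_inv]
  ring

lemma simOf_image {σ : On n} {A B : ConvexBody (Euc n)}
    (hdA : 0 < Metric.diam (A : Set (Euc n))) (hdB : 0 < Metric.diam (B : Set (Euc n)))
    (hrot : rotBody σ (nbody A) = nbody B) :
    ⇑(simOf σ (cheb A) (cheb B) hdA.ne' hdB.ne') '' (A : Set (Euc n)) = (B : Set (Euc n)) := by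
  apply Set.Subset.antisymm
  · rintro _ ⟨x, hx, rfl⟩
    have hz : (Metric.diam (A : Set (Euc n)))⁻¹ • (x - cheb A) ∈ (nbody A : Set (Euc n)) := by
      rw [nbody_coe]; exact ⟨x, hx, rfl⟩
    have hz2 : act σ ((Metric.diam (A : Set (Euc n)))⁻¹ • (x - cheb A)) ∈
        (nbody B : Set (Euc n)) := by
      rw [← hrot, rotBody_coe]; exact ⟨_, hz, rfl⟩
    rw [nbody_coe] at hz2
    obtain ⟨b, hb, hbe⟩ := hz2
    rw [simOf_apply, ← hbe, smul_inv_smul₀ hdB.ne', add_sub_cancel]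
    exact hb
  · intro b hb
    have hw : (Metric.diam (B : Set (Euc n)))⁻¹ • (b - cheb B) ∈ (nbody B : Set (Euc n)) := by
      rw [nbody_coe]; exact ⟨b, hb, rfl⟩
    rw [← hrot, rotBody_coe] at hw
    obtain ⟨z, hz, hze⟩ := hw
    rw [nbody_coe] at hz
    obtain ⟨x, hx, rfl⟩ := hz
    refine ⟨x, hx, ?_⟩
    rw [simOf_apply, hze, smul_inv_smul₀ hdB.ne', add_sub_cancel]

section SimToRot

variable {g : Euc n ≃ᵃ[ℝ] Euc n} {r : ℝ}

lemma linear_norm_of_sim (hr : 0 < r) (hg : ∀ x y : Euc n, dist (g x) (g y) = r * dist x y)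
    (v : Euc n) : ‖g.linear v‖ = r * ‖v‖ := by
  have h1 : (g.linear : Euc n →ₗ[ℝ] Euc n) (v -ᵥ 0) = g v -ᵥ g 0 := by
    rw [← g.linear_toAffineMap]
    exact g.toAffineMap.linearMap_vsub v 0
  rw [vsub_eq_sub, sub_zero, vsub_eq_sub] at h1
  have h2 : ‖g.linear v‖ = dist (g v) (g 0) := by
    rw [dist_eq_norm, ← h1]; rfl
  rw [h2, hg, dist_zero_right]

/-- The normalized linear part of a similarity. -/
noncomputable def rotOf (hr : 0 < r) (hg : ∀ x y : Euc n, dist (g x) (g y) = r * dist x y) :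
    On n :=
  onOf (r⁻¹ • (g.linear : Euc n →ₗ[ℝ] Euc n)) (by
    intro x
    have h1 : (r⁻¹ • (g.linear : Euc n →ₗ[ℝ] Euc n)) x = r⁻¹ • (g.linear x) := rfl
    rw [h1, norm_smul, Real.norm_eq_abs, abs_of_pos (inv_pos.mpr hr),
      linear_norm_of_sim hr hg]
    field_simp)

lemma act_rotOf (hr : 0 < r) (hg : ∀ x y : Euc n, dist (g x) (g y) = r * dist x y) (x : Euc n) :
    act (rotOf hr hg) x = r⁻¹ • g.linear x := by
  rw [rotOf, act_onOf]
  rfl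

lemma nbody_sim (hr : 0 < r) (hg : ∀ x y : Euc n, dist (g x) (g y) = r * dist x y)
    {A B : ConvexBody (Euc n)} (hAB : (B : Set (Euc n)) = ⇑g '' (A : Set (Euc n)))
    (hdA : 0 < Metric.diam (A : Set (Euc n))) :
    nbody B = rotBody (rotOf hr hg) (nbody A) := by
  have hdB : Metric.diam (B : Set (Euc n)) = r * Metric.diam (A : Set (Euc n)) :=
    diam_dilative hr hg hAB
  have hcB : cheb B = g (cheb A) := cheb_dilative hr hg g.surjective hAB
  apply ConvexBody.ext
  rw [nbody_coe, rotBody_coe, nbody_coe, hdB, hcB, hAB, Set.image_image, Set.image_image]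
  apply Set.image_congr
  intro a _
  rw [act_rotOf]
  have hlin : g.linear ((Metric.diam (A : Set (Euc n)))⁻¹ • (a - cheb A))
      = (Metric.diam (A : Set (Euc n)))⁻¹ • (g a - g (cheb A)) := by
    rw [_root_.map_smul]
    congr 1
    have h1 : (g.linear : Euc n →ₗ[ℝ] Euc n) (a -ᵥ cheb A) = g a -ᵥ g (cheb A) := by
      rw [← g.linear_toAffineMap]
      exact g.toAffineMap.linearMap_vsub a (cheb A)
    rw [vsub_eq_sub, vsub_eq_sub] at h1
    exact h1
  rw [hlin, smul_smul, mul_inv]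

lemma sim_apply_decomp (x c : Euc n) : g x = g c + g.linear (x - c) := by
  have h1 : (g.linear : Euc n →ₗ[ℝ] Euc n) (x -ᵥ c) = g x -ᵥ g c := by
    rw [← g.linear_toAffineMap]
    exact g.toAffineMap.linearMap_vsub x c
  rw [vsub_eq_sub, vsub_eq_sub] at h1
  have : g.linear (x - c) = g x - g c := h1
  rw [this]
  abel

end SimToRot



lemma exists_near (A B : ConvexBody (Euc n)) {a : Euc n} (ha : a ∈ (A : Set (Euc n))) :
    ∃ b ∈ (B : Set (Euc n)), dist a b ≤ dist A B := by
  obtain ⟨b, hb, hab⟩ := B.isCompact.exists_infDist_eq_dist B.nonempty a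
  refine ⟨b, hb, ?_⟩
  rw [← hab, ← ConvexBody.hausdorffDist_coe]
  exact infDist_le_hausdorffDist_of_mem ha ConvexBody.hausdorffEdist_ne_top

open Pointwise in
lemma smul_body_coe (r : ℝ) (A : ConvexBody (Euc n)) :
    ((r • A : ConvexBody (Euc n)) : Set (Euc n)) = (fun a => r • a) '' (A : Set (Euc n)) := by
  rw [ConvexBody.coe_smul]
  rfl

lemma add_pt_coe (A : ConvexBody (Euc n)) (v : Euc n) :
    ((A + pt v : ConvexBody (Euc n)) : Set (Euc n)) = (fun a => a + v) '' (A : Set (Euc n)) := by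
  rw [ConvexBody.coe_add]
  rw [show (pt v : Set (Euc n)) = {v} from rfl]
  exact Set.add_singleton

lemma dist_smul_le (r : ℝ) (A B : ConvexBody (Euc n)) :
    dist (r • A) (r • B) ≤ |r| * dist A B := by
  rw [← ConvexBody.hausdorffDist_coe, smul_body_coe, smul_body_coe]
  have key : ∀ (X Y : ConvexBody (Euc n)), ∀ x ∈ (fun a => r • a) '' (X : Set (Euc n)),
      ∃ y ∈ (fun a => r • a) '' (Y : Set (Euc n)), dist x y ≤ |r| * dist X Y := by
    rintro X Y _ ⟨a, ha, rfl⟩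
    obtain ⟨b, hb, hab⟩ := exists_near X Y ha
    refine ⟨r • b, ⟨b, hb, rfl⟩, ?_⟩
    rw [dist_eq_norm, ← smul_sub, norm_smul, Real.norm_eq_abs, ← dist_eq_norm]
    exact mul_le_mul_of_nonneg_left hab (abs_nonneg r)
  apply hausdorffDist_le_of_mem_dist (by positivity)
  · exact key A B
  · intro y hy
    obtain ⟨x, hx, hxy⟩ := key B A y hy
    exact ⟨x, hx, by rwa [dist_comm B A] at hxy⟩

lemma dist_translate (A B : ConvexBody (Euc n)) (v : Euc n) :
    dist (A + pt v) (B + pt v) = dist A B := by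
  rw [← ConvexBody.hausdorffDist_coe, ← ConvexBody.hausdorffDist_coe, add_pt_coe, add_pt_coe]
  exact Metric.hausdorffDist_image (Isometry.of_dist_eq fun a b => by
    simp [dist_add_right])

lemma dist_translate_le (A : ConvexBody (Euc n)) (v w : Euc n) :
    dist (A + pt v) (A + pt w) ≤ ‖v - w‖ := by
  rw [← ConvexBody.hausdorffDist_coe, add_pt_coe, add_pt_coe]
  have key : ∀ a ∈ (A : Set (Euc n)), dist (a + v) (a + w) ≤ ‖v - w‖ := by
    intro a _
    rw [dist_add_left, dist_eq_norm]
  apply hausdorffDist_le_of_mem_dist (norm_nonneg _)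
  · rintro _ ⟨a, ha, rfl⟩
    exact ⟨a + w, ⟨a, ha, rfl⟩, key a ha⟩
  · rintro _ ⟨a, ha, rfl⟩
    exact ⟨a + v, ⟨a, ha, rfl⟩, by rw [dist_comm]; exact key a ha⟩

lemma dist_smul_scalar_le (r s : ℝ) (A : ConvexBody (Euc n)) :
    dist (r • A) (s • A) ≤ |r - s| * rad A 0 := by
  rw [← ConvexBody.hausdorffDist_coe, smul_body_coe, smul_body_coe]
  have key : ∀ a ∈ (A : Set (Euc n)), dist (r • a) (s • a) ≤ |r - s| * rad A 0 := by
    intro a ha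
    rw [dist_eq_norm, ← sub_smul, norm_smul, Real.norm_eq_abs]
    exact mul_le_mul_of_nonneg_left (norm_le_rad A ha) (abs_nonneg _)
  apply hausdorffDist_le_of_mem_dist (mul_nonneg (abs_nonneg _) (rad_nonneg A 0))
  · rintro _ ⟨a, ha, rfl⟩
    exact ⟨s • a, ⟨a, ha, rfl⟩, key a ha⟩
  · rintro _ ⟨a, ha, rfl⟩
    exact ⟨r • a, ⟨a, ha, rfl⟩, by rw [dist_comm]; exact key a ha⟩

lemma continuous_nbody {i : ℕ}
    (hpos : ∀ A : Kplus n i, 0 < Metric.diam (A.1 : Set (Euc n))) :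
    Continuous fun A : Kplus n i => nbody A.1 := by
  have hF : Continuous fun A : Kplus n i => Metric.diam (A.1 : Set (Euc n)) :=
    continuous_diam.comp continuous_subtype_val
  have hFinv : ∀ A₀ : Kplus n i, ContinuousAt
      (fun A : Kplus n i => (Metric.diam (A.1 : Set (Euc n)))⁻¹) A₀ := by
    intro A₀
    exact hF.continuousAt.inv₀ (hpos A₀).ne'
  have hG : Continuous fun A : Kplus n i => -cheb A.1 :=
    (continuous_cheb.comp continuous_subtype_val).neg
  rw [Metric.continuous_iff]
  intro A₀ ε hε
  set F : Kplus n i → ℝ := fun A => (Metric.diam (A.1 : Set (Euc n)))⁻¹ with hFdef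
  set G : Kplus n i → Euc n := fun A => -cheb A.1 with hGdef
  set C : ℝ := rad (A₀.1 + pt (G A₀)) 0 with hC
  have hC0 : 0 ≤ C := rad_nonneg _ _
  set F₀ : ℝ := |F A₀| with hF₀
  have hF₀0 : 0 ≤ F₀ := abs_nonneg _
  set η : ℝ := min 1 (ε / (2 * (F₀ + 1) + C + 1)) with hη
  have hηpos : 0 < η := lt_min one_pos (by positivity)
  have hη1 : η ≤ 1 := min_le_left _ _
  have hη2 : η ≤ ε / (2 * (F₀ + 1) + C + 1) := min_le_right _ _
  obtain ⟨δ₁, hδ₁, hδ₁p⟩ := Metric.continuousAt_iff.mp (hFinv A₀) η hηpos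
  obtain ⟨δ₂, hδ₂, hδ₂p⟩ := Metric.continuousAt_iff.mp hG.continuousAt η hηpos
  refine ⟨min (min δ₁ δ₂) η, by positivity, fun A hA => ?_⟩
  have hA₁ : dist A A₀ < δ₁ := lt_of_lt_of_le hA (le_trans (min_le_left _ _) (min_le_left _ _))
  have hA₂ : dist A A₀ < δ₂ := lt_of_lt_of_le hA (le_trans (min_le_left _ _) (min_le_right _ _))
  have hA₃ : dist A A₀ < η := lt_of_lt_of_le hA (min_le_right _ _)
  have hFd : |F A - F A₀| < η := by
    have := hδ₁p hA₁
    rwa [Real.dist_eq] at this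
  have hGd : ‖G A - G A₀‖ < η := by
    have := hδ₂p hA₂
    rwa [dist_eq_norm] at this
  have hFA : |F A| ≤ F₀ + 1 := by
    have h := abs_sub_abs_le_abs_sub (F A) (F A₀)
    have hF₀e : F₀ = |F A₀| := hF₀
    linarith [hFd.le, hη1]
  have hsub : dist (A.1 : ConvexBody (Euc n)) A₀.1 = dist A A₀ := rfl
  have step : dist (nbody A.1) (nbody A₀.1)
      ≤ |F A| * dist A A₀ + |F A| * ‖G A - G A₀‖ + |F A - F A₀| * C := by
    have t1 : dist (F A • (A.1 + pt (G A))) (F A • (A₀.1 + pt (G A)))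
        ≤ |F A| * dist A A₀ := by
      calc dist (F A • (A.1 + pt (G A))) (F A • (A₀.1 + pt (G A)))
          ≤ |F A| * dist (A.1 + pt (G A)) (A₀.1 + pt (G A)) := dist_smul_le _ _ _
      _ = |F A| * dist A A₀ := by rw [dist_translate, hsub]
    have t2 : dist (F A • (A₀.1 + pt (G A))) (F A • (A₀.1 + pt (G A₀)))
        ≤ |F A| * ‖G A - G A₀‖ := by
      calc dist (F A • (A₀.1 + pt (G A))) (F A • (A₀.1 + pt (G A₀)))
          ≤ |F A| * dist (A₀.1 + pt (G A)) (A₀.1 + pt (G A₀)) := dist_smul_le _ _ _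
      _ ≤ |F A| * ‖G A - G A₀‖ :=
          mul_le_mul_of_nonneg_left (dist_translate_le _ _ _) (abs_nonneg _)
    have t3 : dist (F A • (A₀.1 + pt (G A₀))) (F A₀ • (A₀.1 + pt (G A₀)))
        ≤ |F A - F A₀| * C := dist_smul_scalar_le _ _ _
    have htri := dist_triangle4 (F A • (A.1 + pt (G A))) (F A • (A₀.1 + pt (G A)))
      (F A • (A₀.1 + pt (G A₀))) (F A₀ • (A₀.1 + pt (G A₀)))
    have hnb : nbody A.1 = F A • (A.1 + pt (G A)) := rfl
    have hnb₀ : nbody A₀.1 = F A₀ • (A₀.1 + pt (G A₀)) := rfl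
    rw [hnb, hnb₀]
    linarith
  have final : |F A| * dist A A₀ + |F A| * ‖G A - G A₀‖ + |F A - F A₀| * C
      ≤ η * (2 * (F₀ + 1) + C) := by
    have b1 : |F A| * dist A A₀ ≤ (F₀ + 1) * η :=
      mul_le_mul hFA hA₃.le dist_nonneg (by linarith)
    have b2 : |F A| * ‖G A - G A₀‖ ≤ (F₀ + 1) * η :=
      mul_le_mul hFA hGd.le (norm_nonneg _) (by linarith)
    have b3 : |F A - F A₀| * C ≤ η * C := mul_le_mul_of_nonneg_right hFd.le hC0
    nlinarith
  have hcmp : η * (2 * (F₀ + 1) + C) < ε := by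
    have h1 : η * (2 * (F₀ + 1) + C + 1) ≤ ε := (le_div_iff₀ (by positivity)).mp hη2
    nlinarith
  calc dist (nbody A.1) (nbody A₀.1)
      ≤ |F A| * dist A A₀ + |F A| * ‖G A - G A₀‖ + |F A - F A₀| * C := step
  _ ≤ η * (2 * (F₀ + 1) + C) := final
  _ < ε := hcmp

end S17

open S17

/-- For every `1 ≤ i ≤ n`, the pair `(𝒦ⁿ_{i⁺}, ℝⁿ)` has the `Sim(n)`-finite
extension property: for finite families `K₁,…,K_m ∈ 𝒦ⁿ_{i⁺}` and `y₁,…,y_m ∈ ℝⁿ` such that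
the `Sim(n)`-stabilizer of each `K_j` is contained in that of `y_j`, and the `Sim(n)`-orbits
of the `K_j` are pairwise disjoint, there is a continuous `Sim(n)`-equivariant map
`ψ : 𝒦ⁿ_{i⁺} → ℝⁿ` with `ψ K_j = y_j` for all `j`. -/
theorem statement17 (n i : ℕ) (hi : 1 ≤ i) (hin : i ≤ n) (m : ℕ)
    (K : Fin m → Kplus n i) (y : Fin m → Euc n)
    (hstab : ∀ j, ∀ g ∈ Sim n,
      ⇑g '' ((K j).1 : Set (Euc n)) = ((K j).1 : Set (Euc n)) → g (y j) = y j)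
    (horb : ∀ j k, j ≠ k →
      ¬ ∃ g ∈ Sim n, ⇑g '' ((K j).1 : Set (Euc n)) = ((K k).1 : Set (Euc n))) :
    ∃ ψ : Kplus n i → Euc n, Continuous ψ ∧
      (∀ g ∈ Sim n, ∀ A B : Kplus n i,
        (B.1 : Set (Euc n)) = ⇑g '' (A.1 : Set (Euc n)) → ψ B = g (ψ A)) ∧
      ∀ j, ψ (K j) = y j := by
  classical
  have hpos : ∀ A : Kplus n i, 0 < Metric.diam (A.1 : Set (Euc n)) := by
    intro A
    apply diam_pos_of_nontrivial
    apply nontrivial_of_one_le_finrank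
    exact le_trans hi A.2
  -- the fixed-vector property of the normalized targets
  have hvW : ∀ j, ((Metric.diam ((K j).1 : Set (Euc n)))⁻¹ • (y j - cheb (K j).1))
      ∈ Wfix (nbody (K j).1) := by
    intro j σ hσ
    have hg := simOf_image (σ := σ) (hpos (K j)) (hpos (K j)) hσ
    have hgy := hstab j _ (simOf_mem σ (cheb (K j).1) (cheb (K j).1)
      (hpos (K j)) (hpos (K j))) hg
    rw [simOf_apply] at hgy
    have h3 : Metric.diam ((K j).1 : Set (Euc n)) •
        act σ ((Metric.diam ((K j).1 : Set (Euc n)))⁻¹ • (y j - cheb (K j).1))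
        = y j - cheb (K j).1 := eq_sub_of_add_eq' hgy
    have h4 := congrArg (fun z => (Metric.diam ((K j).1 : Set (Euc n)))⁻¹ • z) h3
    simpa [inv_smul_smul₀ (hpos (K j)).ne'] using h4
  -- choose the bump widths
  choose aa haapos haagood using fun j => exists_good_a (nbody (K j).1)
  -- choose the target preimages
  choose pp hppW hppv using fun j => exists_pvec (nbody (K j).1) (hvW j) (haapos j) (haagood j)
  -- orbit separation
  have hdinv : ∀ j k, j ≠ k → 0 < dinv (nbody (K j).1) (nbody (K k).1) := by
    intro j k hjk
    rcases eq_or_lt_of_le (dinv_nonneg (nbody (K j).1) (nbody (K k).1)) with h0 | h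
    · exfalso
      obtain ⟨σ, hσ⟩ := dinv_eq_zero h0.symm
      exact horb j k hjk ⟨simOf σ (cheb (K j).1) (cheb (K k).1) (hpos (K j)).ne' (hpos (K k)).ne',
        simOf_mem σ _ _ (hpos (K j)) (hpos (K k)), simOf_image (hpos (K j)) (hpos (K k)) hσ⟩
    · exact h
  -- choose the bump radii
  have hE : ∀ j, ∃ ε > 0, ∀ k, k ≠ j → ε ≤ dinv (nbody (K j).1) (nbody (K k).1) := by
    intro j
    by_cases hm : ∃ k : Fin m, k ≠ j
    · obtain ⟨k₀, hk₀⟩ := hm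
      have hs : (Finset.univ.filter (· ≠ j)).Nonempty :=
        ⟨k₀, by simp [hk₀]⟩
      obtain ⟨k₁, hk₁, hmin⟩ := (Finset.univ.filter (· ≠ j)).exists_min_image
        (fun k => dinv (nbody (K j).1) (nbody (K k).1)) hs
      have hk₁j : k₁ ≠ j := by simpa using hk₁
      refine ⟨dinv (nbody (K j).1) (nbody (K k₁).1), hdinv j k₁ (Ne.symm hk₁j), fun k hk => ?_⟩
      exact hmin k (by simp [hk])
    · push_neg at hm
      exact ⟨1, one_pos, fun k hk => absurd (hm k) hk⟩
  choose εε hεpos hεle using hE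
  -- the equivariant field
  refine ⟨fun A => cheb A.1 + Metric.diam (A.1 : Set (Euc n)) •
    (∑ j, term (aa j) (εε j) (nbody (K j).1) (pp j) (nbody A.1)), ?_, ?_, ?_⟩
  · -- continuity
    apply Continuous.add (continuous_cheb.comp continuous_subtype_val)
    apply Continuous.smul (continuous_diam.comp continuous_subtype_val)
    exact (continuous_finset_sum _ fun j _ =>
      continuous_term _ _ (haapos j) _ _).comp (continuous_nbody hpos)
  · -- equivariance
    rintro g ⟨r, hr, hgd⟩ A B hAB
    have hσ := nbody_sim hr hgd hAB (hpos A)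
    have hΦeq : (∑ j, term (aa j) (εε j) (nbody (K j).1) (pp j) (nbody B.1))
        = act (rotOf hr hgd) (∑ j, term (aa j) (εε j) (nbody (K j).1) (pp j) (nbody A.1)) := by
      rw [hσ]
      rw [map_sum (act (rotOf hr hgd)) _ Finset.univ]
      congr 1
      funext j
      exact term_rot _ _ _ _ _ _
    have hcB : cheb B.1 = g (cheb A.1) := cheb_dilative hr hgd g.surjective hAB
    have hdB : Metric.diam (B.1 : Set (Euc n)) = r * Metric.diam (A.1 : Set (Euc n)) :=
      diam_dilative hr hgd hAB
    have hdec := sim_apply_decomp (g := g)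
      (cheb A.1 + Metric.diam (A.1 : Set (Euc n)) •
        (∑ j, term (aa j) (εε j) (nbody (K j).1) (pp j) (nbody A.1))) (cheb A.1)
    rw [add_sub_cancel_left] at hdec
    show cheb B.1 + Metric.diam (B.1 : Set (Euc n)) •
      (∑ j, term (aa j) (εε j) (nbody (K j).1) (pp j) (nbody B.1)) =
      g (cheb A.1 + Metric.diam (A.1 : Set (Euc n)) •
      (∑ j, term (aa j) (εε j) (nbody (K j).1) (pp j) (nbody A.1)))
    rw [hcB, hdB, hΦeq, act_rotOf, hdec]
    congr 1
    rw [_root_.map_smul, smul_smul]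
    rw [show r * Metric.diam (A.1 : Set (Euc n)) * r⁻¹ = Metric.diam (A.1 : Set (Euc n)) by
      field_simp]
  · -- the prescribed values
    intro j
    have hsum : (∑ k, term (aa k) (εε k) (nbody (K k).1) (pp k) (nbody (K j).1))
        = term (aa j) (εε j) (nbody (K j).1) (pp j) (nbody (K j).1) := by
      apply Finset.sum_eq_single
      · intro k _ hk
        exact term_zero (hεpos k) _ (hεle k j (Ne.symm hk))
      · intro h
        exact absurd (Finset.mem_univ j) h
    show cheb (K j).1 + Metric.diam ((K j).1 : Set (Euc n)) •
      (∑ k, term (aa k) (εε k) (nbody (K k).1) (pp k) (nbody (K j).1)) = y j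
    rw [hsum, term_self _ _ (haapos j), hppv j, smul_inv_smul₀ (hpos (K j)).ne',
      add_sub_cancel]
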